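/- arXiv:2112.12949 — 3 statements merged into one kernel-verified Lean document; each statement's English description precedes it below -/
import Mathlib

section
/- Fix real constants η > 0, C > 0, and ε > 0. There exists X₀ > 0 such that the following holds for every real X ≥ X₀: for every natural number r with r ≤ log X / log log X, and every function f : ℂ → ℂ that is complex-differentiable on the closed disk {s ∈ ℂ : |s − 1| ≤ 1/2}, if |f(s)| ≤ C · X^{1/2 + |s−1| − η} for all s with |s − 1| ≤ 1/2, and the k-th derivative of f at 1 vanishes for every k < r, then the r-th Taylor coefficient of f at 1 satisfies |f⁽ʳ⁾(1)/r!| ≤ X^{1/2 − η + ε}. (This is the abstract complex-analytic content of Lemma 2.5 of the paper, which bounds the leading Taylor coefficient of an L-function at its central point given a subconvex bound and a rank bound.) -/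
open Metric Real Filter

lemma cauchy_bound (f : ℂ → ℂ) (c : ℂ) (ρ M : ℝ) (r : ℕ) (hρ : 0 < ρ)
    (hd : DifferentiableOn ℂ f (Metric.closedBall c ρ))
    (hb : ∀ s ∈ Metric.sphere c ρ, ‖f s‖ ≤ M) :
    ‖iteratedDeriv r f c / (r.factorial : ℂ)‖ ≤ M * ρ⁻¹ ^ r := by
  have hM : 0 ≤ M := le_trans (norm_nonneg _)
    (hb (c + ρ) (by simp [hρ.le, Complex.dist_eq, abs_of_nonneg hρ.le]))
  set R : NNReal := ⟨ρ, hρ.le⟩ with hRdef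
  have hps : HasFPowerSeriesOnBall f (cauchyPowerSeries f c R) c R :=
    hd.hasFPowerSeriesOnBall (by exact_mod_cast hρ)
  have key := hps.factorial_smul (1 : ℂ) r
  have hcont : ContinuousOn (fun θ : ℝ => ‖f (circleMap c ρ θ)‖) (Set.uIcc 0 (2*π)) :=
    (hd.continuousOn.comp (continuous_circleMap c ρ).continuousOn
      (fun θ _ => Metric.sphere_subset_closedBall (circleMap_mem_sphere c hρ.le θ))).norm
  have hint : ∫ θ in (0:ℝ)..2*π, ‖f (circleMap c ρ θ)‖ ≤ 2*π*M := by
    calc ∫ θ in (0:ℝ)..2*π, ‖f (circleMap c ρ θ)‖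
        ≤ ∫ _ in (0:ℝ)..2*π, M :=
          intervalIntegral.integral_mono_on Real.two_pi_pos.le hcont.intervalIntegrable
            intervalIntegrable_const
            (fun θ _ => hb _ (circleMap_mem_sphere c hρ.le θ))
      _ = 2*π*M := by simp
  have hpr : ‖cauchyPowerSeries f c R r‖ ≤ M * ρ⁻¹ ^ r := by
    refine le_trans (norm_cauchyPowerSeries_le f c ρ r) ?_
    rw [abs_of_nonneg hρ.le]
    gcongr
    calc (2*π)⁻¹ * ∫ θ in (0:ℝ)..2*π, ‖f (circleMap c ρ θ)‖
        ≤ (2*π)⁻¹ * (2*π*M) := by gcongr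
      _ = M := by field_simp
  have h1 : ‖iteratedDeriv r f c‖ ≤ r.factorial * (M * ρ⁻¹ ^ r) := by
    rw [iteratedDeriv_eq_iteratedFDeriv, ← key, ← Nat.cast_smul_eq_nsmul ℂ, norm_smul]
    simp only [Complex.norm_natCast]
    gcongr
    calc ‖cauchyPowerSeries f c R r (fun _ => (1:ℂ))‖
        ≤ ‖cauchyPowerSeries f c R r‖ * ∏ _i : Fin r, ‖(1:ℂ)‖ :=
          (cauchyPowerSeries f c R r).le_opNorm _
      _ = ‖cauchyPowerSeries f c R r‖ := by simp
      _ ≤ M * ρ⁻¹ ^ r := hpr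
  rw [norm_div, Complex.norm_natCast, div_le_iff₀ (by positivity : (0:ℝ) < r.factorial)]
  linarith [h1]



set_option maxHeartbeats 1000000 in
/-- Fix real constants `η > 0`, `C > 0`, `ε > 0`. There exists `X₀ > 0` such
that for every `X ≥ X₀`, every natural number `r ≤ log X / log log X`, and every function
`f : ℂ → ℂ` that is complex-differentiable on (an open neighborhood of) the closed disk
`{s : |s - 1| ≤ 1/2}`, if `|f s| ≤ C * X ^ (1/2 + |s - 1| - η)` on that disk and the `k`-th
derivative of `f` at `1` vanishes for all `k < r`, then
`|f⁽ʳ⁾(1) / r!| ≤ X ^ (1/2 - η + ε)`. -/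
theorem stmt0 (η C ε : ℝ) (hη : 0 < η) (hC : 0 < C) (hε : 0 < ε) :
    ∃ X₀ : ℝ, 0 < X₀ ∧ ∀ X : ℝ, X₀ ≤ X →
      ∀ r : ℕ, (r : ℝ) ≤ Real.log X / Real.log (Real.log X) →
        ∀ f : ℂ → ℂ,
          (∃ U : Set ℂ, IsOpen U ∧ Metric.closedBall (1 : ℂ) (1 / 2) ⊆ U ∧
            DifferentiableOn ℂ f U) →
          (∀ s : ℂ, ‖s - 1‖ ≤ 1 / 2 →
            ‖f s‖ ≤ C * X ^ ((1 : ℝ) / 2 + ‖s - 1‖ - η)) →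
          (∀ k : ℕ, k < r → iteratedDeriv k f 1 = 0) →
          ‖iteratedDeriv r f 1 / (r.factorial : ℂ)‖ ≤
            X ^ ((1 : ℝ) / 2 - η + ε) := by
  have t2 : Tendsto (fun X : ℝ => Real.log (Real.log X)) atTop atTop :=
    Real.tendsto_log_atTop.comp Real.tendsto_log_atTop
  have tg : Tendsto (fun M : ℝ => (2 + 2 * Real.log M) / M) atTop (nhds 0) := by
    have h1 : Tendsto (fun M : ℝ => 2 / M) atTop (nhds (0:ℝ)) :=
      Filter.Tendsto.div_atTop tendsto_const_nhds tendsto_id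
    have h2 : Tendsto (fun M : ℝ => 2 * (Real.log M / M)) atTop (nhds (0:ℝ)) := by
      simpa using (Real.isLittleO_log_id_atTop.tendsto_div_nhds_zero.const_mul (2:ℝ))
    have h3 := h1.add h2
    rw [add_zero] at h3
    exact h3.congr (fun M => by ring)
  have hE : ∀ᶠ X : ℝ in atTop, (2 ≤ Real.log (Real.log X)) ∧
      (Real.log C ≤ ε/2 * Real.log X) ∧
      ((2 + 2*Real.log (Real.log (Real.log X))) / Real.log (Real.log X) ≤ ε/2) := by
    have e1 := t2.eventually_ge_atTop 2
    have e2 : ∀ᶠ X : ℝ in atTop, Real.log C ≤ ε/2 * Real.log X := by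
      filter_upwards [Real.tendsto_log_atTop.eventually_ge_atTop (2/ε * Real.log C)] with X h
      have : ε/2 * (2/ε * Real.log C) ≤ ε/2 * Real.log X :=
        mul_le_mul_of_nonneg_left h (by positivity)
      calc Real.log C = ε/2 * (2/ε * Real.log C) := by field_simp
        _ ≤ ε/2 * Real.log X := this
    have e3 := (tg.comp t2).eventually (eventually_le_nhds (by positivity : (0:ℝ) < ε/2))
    filter_upwards [e1, e2, e3] with X h1 h2 h3
    exact ⟨h1, h2, h3⟩
  obtain ⟨X₁, hX₁⟩ := eventually_atTop.mp hE
  refine ⟨max X₁ 2, lt_of_lt_of_le two_pos (le_max_right _ _), ?_⟩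
  intro X hX r hr f hU hbound _
  obtain ⟨hM2, hlogC, hsmall⟩ := hX₁ X (le_trans (le_max_left _ _) hX)
  have hX2 : (2:ℝ) ≤ X := le_trans (le_max_right _ _) hX
  have hX0 : (0:ℝ) < X := by linarith
  set L := Real.log X with hLdef
  set M := Real.log L with hMdef
  have hLpos : 0 < L := Real.log_pos (by linarith)
  have hMpos : 0 < M := by linarith
  have hN0 : 0 ≤ Real.log M := Real.log_nonneg (by linarith)
  obtain ⟨U, hUo, hUs, hUd⟩ := hU
  have hdiff : DifferentiableOn ℂ f (Metric.closedBall 1 (1/2)) := hUd.mono hUs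
  have hCX : C ≤ X ^ (ε/2) := by
    calc C = Real.exp (Real.log C) := (Real.exp_log hC).symm
      _ ≤ Real.exp (ε/2 * L) := Real.exp_le_exp.mpr hlogC
      _ = X ^ (ε/2) := by rw [Real.rpow_def_of_pos hX0, mul_comm]
  rcases Nat.eq_zero_or_pos r with hr0 | hr1
  · subst hr0
    simp only [iteratedDeriv_zero, Nat.factorial_zero, Nat.cast_one, div_one]
    have h1 := hbound 1 (by simp)
    simp only [sub_self, map_zero, add_zero] at h1
    calc ‖f 1‖ ≤ C * X ^ ((1:ℝ)/2 + 0 - η) := by simpa using h1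
      _ ≤ X ^ (ε/2) * X ^ ((1:ℝ)/2 + 0 - η) := by gcongr
      _ ≤ X ^ ((1:ℝ)/2 - η + ε) := by
          rw [← Real.rpow_add hX0]
          apply Real.rpow_le_rpow_of_exponent_le (by linarith)
          linarith
  · set ρ : ℝ := r / L with hρdef
    have hrf : (1:ℝ) ≤ (r:ℝ) := by exact_mod_cast hr1
    have hρpos : 0 < ρ := by positivity
    have hrML : (r:ℝ) * M ≤ L := (le_div_iff₀ hMpos).mp hr
    have hρle : ρ ≤ 1/2 := by
      rw [hρdef, div_le_iff₀ hLpos]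
      nlinarith
    have hb : ∀ s ∈ Metric.sphere (1:ℂ) ρ, ‖f s‖ ≤ C * X ^ ((1:ℝ)/2 + ρ - η) := by
      intro s hs
      have hd1 : ‖s - 1‖ = ρ := by
        rw [Metric.mem_sphere] at hs
        rw [← hs, Complex.dist_eq]
      have := hbound s (by rw [hd1]; exact hρle)
      rwa [hd1] at this
    have hcb := cauchy_bound f 1 ρ (C * X ^ ((1:ℝ)/2 + ρ - η)) r hρpos
      (hdiff.mono (Metric.closedBall_subset_closedBall hρle)) hb
    refine le_trans hcb ?_
    -- key combinatorial estimate
    have hlogr0 : 0 ≤ Real.log r := Real.log_nonneg hrf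
    have hsmall' : 2 + 2*Real.log M ≤ ε/2 * M := (div_le_iff₀ hMpos).mp hsmall
    have hkey : (r:ℝ) + (r:ℝ) * (M - Real.log r) ≤ ε/2 * L := by
      rcases le_or_gt (r:ℝ) (L/M^2) with hc | hc
      · have hc' : (r:ℝ) * M^2 ≤ L := (le_div_iff₀ (by positivity)).mp hc
        nlinarith [mul_le_mul_of_nonneg_right hsmall' (mul_nonneg (by positivity : (0:ℝ) ≤ (r:ℝ)) hMpos.le),
          mul_le_mul_of_nonneg_left hc' (by positivity : (0:ℝ) ≤ ε/2),
          mul_nonneg (by positivity : (0:ℝ) ≤ (r:ℝ)) hlogr0]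
      · have hlr : M - 2*Real.log M < Real.log r := by
          have h4 := Real.log_lt_log (by positivity : (0:ℝ) < L/M^2) hc
          rw [Real.log_div (ne_of_gt hLpos) (by positivity), Real.log_pow] at h4
          push_cast at h4
          linarith
        have h5 : (r:ℝ) * (M - Real.log r) ≤ (r:ℝ) * (2 * Real.log M) :=
          mul_le_mul_of_nonneg_left (by linarith) (by positivity)
        have h6 : (r:ℝ) * (2 + 2 * Real.log M) ≤ (r:ℝ) * (ε/2 * M) :=
          mul_le_mul_of_nonneg_left hsmall' (by positivity)
        have h7 : ε/2 * ((r:ℝ) * M) ≤ ε/2 * L :=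
          mul_le_mul_of_nonneg_left hrML (by positivity)
        nlinarith [h5, h6, h7]
    have hρL : ρ * L = (r:ℝ) := div_mul_cancel₀ _ (ne_of_gt hLpos)
    rw [← Real.log_le_log_iff (by positivity) (by positivity : (0:ℝ) < X ^ ((1:ℝ)/2 - η + ε))]
    rw [Real.log_mul (by positivity) (by positivity), Real.log_mul (ne_of_gt hC) (by positivity),
      Real.log_rpow hX0, Real.log_rpow hX0, Real.log_pow, Real.log_inv,
      Real.log_div (by positivity : (r:ℝ) ≠ 0) (ne_of_gt hLpos)]
    rw [← hLdef]
    rw [hMdef] at hkey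
    nlinarith [hkey, hlogC, hρL]
end

section
/- Let K be a number field with ring of integers O_K, and let m ≥ 1 be an integer. Then the group A_{m,K} is finite, and its cardinality satisfies #A_{m,K} = #(Cl(K)[m]) · #(O_K^×/(O_K^×)^m). -/
open NumberField IsDedekindDomain FractionalIdeal nonZeroDivisors

section Aux


variable {R : Type*} [CommRing R] [IsDedekindDomain R] {K : Type*} [Field K]
  [Algebra R K] [IsFractionRing R K]

theorem my_val_eq_count (v : HeightOneSpectrum R) (α : Kˣ) :
    v.valuation K (α : K) =
      ((Multiplicative.ofAdd (-(count K v (spanSingleton R⁰ (α : K)))) : Multiplicative ℤ) :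
        WithZero (Multiplicative ℤ)) := by
  obtain ⟨⟨n, d⟩, hnd⟩ := IsLocalization.mk'_surjective R⁰ (α : K)
  dsimp only at hnd
  have hn : n ≠ 0 := by
    rintro rfl
    rw [IsLocalization.mk'_zero] at hnd
    exact α.ne_zero hnd.symm
  have hd : (d : R) ≠ 0 := nonZeroDivisors.coe_ne_zero d
  have h0 : spanSingleton R⁰ ((α : K)) ≠ 0 :=
    spanSingleton_ne_zero_iff.mpr α.ne_zero
  have hI : spanSingleton R⁰ ((α : K)) =
      spanSingleton R⁰ ((algebraMap R K) (d : R))⁻¹ * ↑(Ideal.span {n} : Ideal R) := by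
    rw [← hnd, coeIdeal_span_singleton, spanSingleton_mul_spanSingleton,
      IsFractionRing.mk'_eq_div, div_eq_mul_inv, mul_comm]
  rw [count_well_defined K v h0 hI, ← hnd, HeightOneSpectrum.valuation_of_mk',
    HeightOneSpectrum.intValuation_apply, HeightOneSpectrum.intValuation_apply,
    v.intValuationDef_if_neg hn, v.intValuationDef_if_neg hd]
  rw [← WithZero.exp_sub, WithZero.exp, WithZero.coe_inj]
  congr 1
  ring



variable {R : Type*} [CommRing R] [IsDedekindDomain R] {K : Type*} [Field K]
  [Algebra R K] [IsFractionRing R K]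

theorem my_units_ext {I J : (FractionalIdeal R⁰ K)ˣ}
    (h : ∀ v : HeightOneSpectrum R,
      count K v (I : FractionalIdeal R⁰ K) = count K v (J : FractionalIdeal R⁰ K)) : I = J := by
  have hI := finprod_heightOneSpectrum_factorization' (K := K) (I := (I : FractionalIdeal R⁰ K))
    I.ne_zero
  have hJ := finprod_heightOneSpectrum_factorization' (K := K) (I := (J : FractionalIdeal R⁰ K))
    J.ne_zero
  rw [Units.ext_iff, ← hI, ← hJ]
  exact finprod_congr fun v => by rw [h v]

theorem my_exists_root {m : ℕ} (hm : 0 < m) {I : (FractionalIdeal R⁰ K)ˣ}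
    (h : ∀ v : HeightOneSpectrum R, (m : ℤ) ∣ count K v (I : FractionalIdeal R⁰ K)) :
    ∃ J : (FractionalIdeal R⁰ K)ˣ, J ^ m = I := by
  set e : HeightOneSpectrum R → ℤ := fun v => count K v (I : FractionalIdeal R⁰ K) / m with he
  have hsupp : ∀ᶠ v : HeightOneSpectrum R in Filter.cofinite, e v = 0 :=
    (finite_factors (I : FractionalIdeal R⁰ K)).mono fun v hv => by
      simp [he, hv]
  set J0 : FractionalIdeal R⁰ K := ∏ᶠ v : HeightOneSpectrum R,
    (v.asIdeal : FractionalIdeal R⁰ K) ^ (e v) with hJ0def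
  have hcnt : ∀ v : HeightOneSpectrum R, count K v J0 = e v := fun v =>
    count_finprod K v e hsupp
  have hJ0 : J0 ≠ 0 := by
    intro h0
    have he0 : ∀ v, e v = 0 := fun v => by rw [← hcnt v, h0, count_zero]
    have : J0 = 1 := by
      rw [hJ0def]
      have : ∀ v : HeightOneSpectrum R,
          (v.asIdeal : FractionalIdeal R⁰ K) ^ (e v) = 1 := fun v => by
        rw [he0 v, zpow_zero]
      rw [finprod_congr this, finprod_one]
    rw [this] at h0
    exact one_ne_zero h0
  have hpow : J0 ^ m = (I : FractionalIdeal R⁰ K) := by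
    have h1 : (J0 ^ m : FractionalIdeal R⁰ K) ≠ 0 := pow_ne_zero _ hJ0
    rw [← finprod_heightOneSpectrum_factorization' (K := K) h1,
      ← finprod_heightOneSpectrum_factorization' (K := K) I.ne_zero]
    refine finprod_congr fun v => ?_
    congr 1
    rw [count_pow, hcnt, he]
    exact Int.mul_ediv_cancel' (h v)
  refine ⟨Units.mk0 J0 hJ0, Units.ext ?_⟩
  rw [Units.val_pow_eq_pow_val, Units.val_mk0]
  exact hpow

theorem my_count_pow_units {m : ℕ} (J : (FractionalIdeal R⁰ K)ˣ) (v : HeightOneSpectrum R) :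
    count K v ((J ^ m : (FractionalIdeal R⁰ K)ˣ) : FractionalIdeal R⁰ K) =
      m * count K v (J : FractionalIdeal R⁰ K) := by
  rw [Units.val_pow_eq_pow_val, count_pow]

theorem my_pow_injective {m : ℕ} (hm : 0 < m) :
    Function.Injective (powMonoidHom m : (FractionalIdeal R⁰ K)ˣ →* (FractionalIdeal R⁰ K)ˣ) := by
  intro I J h
  refine my_units_ext fun v => ?_
  have := congrArg (fun I : (FractionalIdeal R⁰ K)ˣ => count K v (I : FractionalIdeal R⁰ K)) h
  simp only [powMonoidHom_apply, my_count_pow_units] at this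
  have hm' : (m : ℤ) ≠ 0 := by exact_mod_cast hm.ne'
  exact mul_left_cancel₀ hm' this

theorem my_ker_classGroup_mk :
    (ClassGroup.mk K : (FractionalIdeal R⁰ K)ˣ →* ClassGroup R).ker =
      (toPrincipalIdeal R K).range := by
  ext I
  rw [MonoidHom.mem_ker, ClassGroup.mk_eq_one_iff, mem_principal_ideals_iff]
  constructor
  · rintro ⟨⟨x, hx⟩⟩
    refine ⟨x, coeToSubmodule_injective ?_⟩
    show (spanSingleton R⁰ x : Submodule R K) = ((I : FractionalIdeal R⁰ K) : Submodule R K)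
    rw [coe_spanSingleton]
    exact hx.symm
  · rintro ⟨x, hx⟩
    exact ⟨⟨x, by rw [← hx, coe_spanSingleton]⟩⟩

theorem my_classGroup_mk_surjective :
    Function.Surjective (ClassGroup.mk K : (FractionalIdeal R⁰ K)ˣ →* ClassGroup R) := by
  intro c
  obtain ⟨I, hI⟩ := QuotientGroup.mk'_surjective (toPrincipalIdeal R (FractionRing R)).range c
  refine ⟨Units.map (↑(canonicalEquiv R⁰ (FractionRing R) K)) I, ?_⟩
  rw [ClassGroup.mk_canonicalEquiv, ← ClassGroup.Quot_mk_eq_mk]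
  exact hI

theorem my_ker_toPrincipal :
    (toPrincipalIdeal R K).ker = (Units.map (algebraMap R K : R →* K)).range := by
  ext x
  rw [MonoidHom.mem_ker]
  constructor
  · intro hx
    have hx1 : spanSingleton R⁰ (x : K) = (1 : FractionalIdeal R⁰ K) := by
      have := congrArg (Units.val) hx
      rwa [coe_toPrincipalIdeal, Units.val_one] at this
    have hxm : (x : K) ∈ (1 : FractionalIdeal R⁰ K) := by
      rw [← hx1]
      exact mem_spanSingleton_self _ _
    have hxi : ((x⁻¹ : Kˣ) : K) ∈ (1 : FractionalIdeal R⁰ K) := by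
      have : spanSingleton R⁰ ((x⁻¹ : Kˣ) : K) = (1 : FractionalIdeal R⁰ K) := by
        rw [show ((x⁻¹ : Kˣ) : K) = ((x : K))⁻¹ from Units.val_inv_eq_inv_val x,
          ← inv_one, ← hx1, spanSingleton_inv]
      rw [← this]
      exact mem_spanSingleton_self _ _
    obtain ⟨r, hr⟩ := (mem_one_iff R⁰).mp hxm
    obtain ⟨s, hs⟩ := (mem_one_iff R⁰).mp hxi
    have hrs : r * s = 1 := by
      apply IsFractionRing.injective R K
      rw [_root_.map_mul, _root_.map_one, hr, hs]
      exact x.mul_inv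
    have hsr : s * r = 1 := by rwa [mul_comm] at hrs
    exact ⟨⟨r, s, hrs, hsr⟩, Units.ext (by simpa using hr)⟩
  · rintro ⟨u, rfl⟩
    apply Units.ext
    rw [coe_toPrincipalIdeal, Units.val_one]
    have : ((Units.map (algebraMap R K : R →* K) u : Kˣ) : K) = algebraMap R K (u : R) := rfl
    rw [this, ← coeIdeal_span_singleton, Ideal.span_singleton_eq_top.mpr u.isUnit]
    simp

theorem my_comap_pow (m : ℕ) (hm : 0 < m) :
    Subgroup.comap (Units.map (algebraMap R K : R →* K))
        ((powMonoidHom m : Kˣ →* Kˣ).range) = (powMonoidHom m : Rˣ →* Rˣ).range := by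
  haveI : Fact (0 < m) := ⟨hm⟩
  ext x
  rw [Subgroup.mem_comap, ← QuotientGroup.eq_one_iff,
    ← selmerGroup.fromUnit_ker (R := R) (K := K) (n := m), MonoidHom.mem_ker, Subtype.ext_iff]
  rfl

end Aux

set_option maxHeartbeats 2000000 in
/-- Let `K` be a number field and `m ≥ 1`. Let `A = A_{m,K}` be the subgroup of
`K^×/(K^×)^m` of classes of elements all of whose valuations at finite places are divisible by
`m`. Then `A` is finite and `#A = #(Cl(K)[m]) * #(𝓞_K^×/(𝓞_K^×)^m)`. -/
theorem stmt4 (K : Type*) [Field K] [NumberField K] (m : ℕ) (hm : 1 ≤ m)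
    (A : Subgroup (Kˣ ⧸ (powMonoidHom m : Kˣ →* Kˣ).range))
    (hA : (A : Set (Kˣ ⧸ (powMonoidHom m : Kˣ →* Kˣ).range)) =
      {q | ∀ α : Kˣ, (QuotientGroup.mk α : Kˣ ⧸ (powMonoidHom m : Kˣ →* Kˣ).range) = q →
        ∀ v : HeightOneSpectrum (𝓞 K), ∃ k : ℤ,
          v.valuation K ((α : K)) =
            ((Multiplicative.ofAdd ((m : ℤ) * k) : Multiplicative ℤ) :
              WithZero (Multiplicative ℤ))}) :
    Finite A ∧
      Nat.card A =
        Nat.card {c : ClassGroup (𝓞 K) // c ^ m = 1} *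
          Nat.card ((𝓞 K)ˣ ⧸ (powMonoidHom m : (𝓞 K)ˣ →* (𝓞 K)ˣ).range) := by
  classical
  have hm0 : 0 < m := hm
  set G := (FractionalIdeal (𝓞 K)⁰ K)ˣ with hGdef
  set d : Kˣ →* G := toPrincipalIdeal (𝓞 K) K with hddef
  set π : G →* ClassGroup (𝓞 K) := ClassGroup.mk K with hπdef
  set P : Subgroup G := (powMonoidHom m : G →* G).range with hPdef
  have hPmem : ∀ I : G, I ∈ P ↔ ∀ v : HeightOneSpectrum (𝓞 K),
      (m : ℤ) ∣ count K v (I : FractionalIdeal (𝓞 K)⁰ K) := by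
    intro I
    constructor
    · rintro ⟨J, rfl⟩ v
      rw [powMonoidHom_apply, my_count_pow_units]
      exact Dvd.intro _ rfl
    · intro h
      obtain ⟨J, hJ⟩ := my_exists_root hm0 h
      exact ⟨J, hJ⟩
  set B : Subgroup Kˣ := Subgroup.comap d P with hBdef
  -- `A` vs `B`
  have hBA : ∀ α : Kˣ, (QuotientGroup.mk α : Kˣ ⧸ (powMonoidHom m : Kˣ →* Kˣ).range) ∈ A ↔ α ∈ B := by
    intro α
    rw [show ((QuotientGroup.mk α : Kˣ ⧸ (powMonoidHom m : Kˣ →* Kˣ).range) ∈ A) ↔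
        (QuotientGroup.mk α : Kˣ ⧸ (powMonoidHom m : Kˣ →* Kˣ).range) ∈ (A : Set (Kˣ ⧸ (powMonoidHom m : Kˣ →* Kˣ).range)) from Iff.rfl, hA,
      Set.mem_setOf_eq]
    constructor
    · intro h
      show d α ∈ P
      rw [hPmem]
      intro v
      obtain ⟨k, hk⟩ := h α rfl v
      rw [my_val_eq_count v α, WithZero.coe_inj] at hk
      have hk' := Multiplicative.ofAdd.injective hk
      rw [coe_toPrincipalIdeal]
      exact ⟨-k, by rw [mul_neg, ← hk', neg_neg]⟩
    · intro hB β hβ v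
      have hβα : β⁻¹ * α ∈ (powMonoidHom m : Kˣ →* Kˣ).range := by rwa [← QuotientGroup.eq]
      obtain ⟨γ, hγ⟩ := hβα
      have hβ' : β = α * (γ⁻¹) ^ m := by
        have : γ ^ m = β⁻¹ * α := hγ
        rw [inv_pow, this]
        group
      have hdα : d α ∈ P := hB
      obtain ⟨J, hJ⟩ := hdα
      have hdβ : d β = (J * d γ⁻¹) ^ m := by
        rw [hβ', _root_.map_mul, _root_.map_pow, mul_pow, ← hJ]
        rfl
      refine ⟨-(count K v ((J * d γ⁻¹ : G) : FractionalIdeal (𝓞 K)⁰ K)), ?_⟩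
      rw [my_val_eq_count v β, WithZero.coe_inj]
      congr 1
      have hcoe : spanSingleton (𝓞 K)⁰ (β : K) =
          (((J * d γ⁻¹) ^ m : G) : FractionalIdeal (𝓞 K)⁰ K) := by
        rw [← hdβ, coe_toPrincipalIdeal]
      rw [hcoe, my_count_pow_units]
      ring
  have hNB : (powMonoidHom m : Kˣ →* Kˣ).range ≤ B := by
    rintro x ⟨γ, rfl⟩
    show d (powMonoidHom m γ) ∈ P
    rw [powMonoidHom_apply, map_pow]
    exact ⟨d γ, rfl⟩
  -- the m-th root equivalence
  have hpowinj : Function.Injective (powMonoidHom m : G →* G) := my_pow_injective hm0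
  set e : G ≃* P := MonoidHom.ofInjective hpowinj with hedef
  have hJe : ∀ x : P, (e.symm x : G) ^ m = (x : G) := by
    intro x
    have h1 : e (e.symm x) = x := e.apply_symm_apply x
    have h2 := congrArg (Subtype.val) h1
    rwa [MonoidHom.ofInjective_apply, powMonoidHom_apply] at h2
  set dB : B →* G := d.comp B.subtype with hdBdef
  have hdBP : ∀ b : B, dB b ∈ P := fun b => b.2
  set F : B →* ClassGroup (𝓞 K) :=
    π.comp (e.symm.toMonoidHom.comp (dB.codRestrict P hdBP)) with hFdef
  have hF : ∀ (b : B) (J : G), J ^ m = d (b : Kˣ) → F b = π J := by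
    intro b J hJ
    have h1 : e.symm ⟨d (b : Kˣ), b.2⟩ = J := by
      rw [MulEquiv.symm_apply_eq]
      apply Subtype.ext
      rw [MonoidHom.ofInjective_apply, powMonoidHom_apply, hJ]
    show π (e.symm ((dB.codRestrict P hdBP) b)) = π J
    have h2 : (dB.codRestrict P hdBP) b = ⟨d (b : Kˣ), b.2⟩ := rfl
    rw [h2, h1]
  have hπd : ∀ x : Kˣ, π (d x) = 1 := by
    intro x
    have : d x ∈ π.ker := by
      rw [hπdef, my_ker_classGroup_mk]
      exact ⟨x, rfl⟩
    exact this
  have hFpow : ∀ b : B, (F b) ^ m = 1 := by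
    intro b
    have hJ : (e.symm ⟨d (b : Kˣ), b.2⟩ : G) ^ m = d (b : Kˣ) := hJe _
    rw [hF b _ hJ, ← map_pow, hJ]
    exact hπd _
  have hFsurj : ∀ c : ClassGroup (𝓞 K), c ^ m = 1 → ∃ b : B, F b = c := by
    intro c hc
    obtain ⟨I, rfl⟩ := my_classGroup_mk_surjective (R := 𝓞 K) (K := K) c
    have hIm : I ^ m ∈ π.ker := by
      rw [MonoidHom.mem_ker, map_pow]
      exact hc
    rw [hπdef, my_ker_classGroup_mk] at hIm
    obtain ⟨α, hα⟩ := hIm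
    have hαB : α ∈ B := by
      show d α ∈ P
      exact ⟨I, by rw [powMonoidHom_apply, hα]⟩
    exact ⟨⟨α, hαB⟩, hF ⟨α, hαB⟩ I (by rw [hα])⟩
  have hFker : ∀ b : B, F b = 1 → ∃ (u : (𝓞 K)ˣ) (γ : Kˣ),
      (b : Kˣ) = (Units.map (algebraMap (𝓞 K) K : (𝓞 K) →* K) u) * γ ^ m := by
    intro b hb
    have hJ : (e.symm ⟨d (b : Kˣ), b.2⟩ : G) ^ m = d (b : Kˣ) := hJe _
    have hπJ : π (e.symm ⟨d (b : Kˣ), b.2⟩ : G) = 1 := by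
      rw [← hF b _ hJ]
      exact hb
    have hmem : (e.symm ⟨d (b : Kˣ), b.2⟩ : G) ∈ d.range := by
      rw [← my_ker_classGroup_mk (R := 𝓞 K) (K := K)]
      exact hπJ
    obtain ⟨γ, hγ⟩ := hmem
    have hd1 : d ((b : Kˣ) * (γ ^ m)⁻¹) = 1 := by
      rw [_root_.map_mul, _root_.map_inv, _root_.map_pow, hγ, hJ, mul_inv_cancel]
    have : (b : Kˣ) * (γ ^ m)⁻¹ ∈ (toPrincipalIdeal (𝓞 K) K).ker := hd1
    rw [my_ker_toPrincipal] at this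
    obtain ⟨u, hu⟩ := this
    refine ⟨u, γ, ?_⟩
    rw [hu]
    group
  -- the quotient `B ⧸ N` is `A`
  set p' : B →* A := ((QuotientGroup.mk' (powMonoidHom m : Kˣ →* Kˣ).range).comp B.subtype).codRestrict A
      (fun b => (hBA (b : Kˣ)).mpr b.2) with hp'def
  have hp'surj : Function.Surjective p' := by
    rintro ⟨a, ha⟩
    obtain ⟨α, hα⟩ := QuotientGroup.mk'_surjective (powMonoidHom m : Kˣ →* Kˣ).range a
    have hαB : α ∈ B := (hBA α).mp (by rw [show (QuotientGroup.mk α : Kˣ ⧸ (powMonoidHom m : Kˣ →* Kˣ).range) = a from hα]; exact ha)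
    exact ⟨⟨α, hαB⟩, Subtype.ext hα⟩
  have hp'ker : p'.ker = (powMonoidHom m : Kˣ →* Kˣ).range.subgroupOf B := by
    ext b
    rw [MonoidHom.mem_ker, Subgroup.mem_subgroupOf, Subtype.ext_iff]
    show (QuotientGroup.mk (b : Kˣ) : Kˣ ⧸ (powMonoidHom m : Kˣ →* Kˣ).range) = 1 ↔ _
    rw [QuotientGroup.eq_one_iff]
  set eA : (B ⧸ p'.ker) ≃* A := QuotientGroup.quotientKerEquivOfSurjective p' hp'surj with heA
  have hFN : ∀ b : B, b ∈ p'.ker → F b = 1 := by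
    intro b hb
    rw [hp'ker, Subgroup.mem_subgroupOf] at hb
    obtain ⟨γ, hγ⟩ := hb
    have hdγ : (d γ) ^ m = d (b : Kˣ) := by
      rw [← map_pow, ← powMonoidHom_apply, hγ]
    rw [hF b (d γ) hdγ]
    exact hπd γ
  set Fbar : (B ⧸ p'.ker) →* ClassGroup (𝓞 K) := QuotientGroup.lift p'.ker F hFN with hFbardef
  have hFbar : ∀ b : B, Fbar (QuotientGroup.mk b) = F b := fun b => rfl
  -- range of Fbar
  have hrange : Fbar.range = (powMonoidHom m : ClassGroup (𝓞 K) →* ClassGroup (𝓞 K)).ker := by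
    ext c
    rw [MonoidHom.mem_range, MonoidHom.mem_ker, powMonoidHom_apply]
    constructor
    · rintro ⟨q, rfl⟩
      obtain ⟨b, rfl⟩ := QuotientGroup.mk'_surjective p'.ker q
      rw [show ((QuotientGroup.mk' p'.ker) b) = QuotientGroup.mk b from rfl, hFbar]
      exact hFpow b
    · intro hc
      obtain ⟨b, hb⟩ := hFsurj c hc
      exact ⟨QuotientGroup.mk b, by rw [hFbar, hb]⟩
  -- kernel of Fbar
  set g' : (𝓞 K)ˣ →* B := (Units.map (algebraMap (𝓞 K) K : (𝓞 K) →* K)).codRestrict B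
      (by
        intro u
        show d (Units.map (algebraMap (𝓞 K) K : (𝓞 K) →* K) u) ∈ P
        have : Units.map (algebraMap (𝓞 K) K : (𝓞 K) →* K) u ∈ (toPrincipalIdeal (𝓞 K) K).ker := by
          rw [my_ker_toPrincipal]
          exact ⟨u, rfl⟩
        rw [show d (Units.map (algebraMap (𝓞 K) K : (𝓞 K) →* K) u) = 1 from this]
        exact one_mem P) with hg'def
  set h1 : (𝓞 K)ˣ →* (B ⧸ p'.ker) := (QuotientGroup.mk' p'.ker).comp g' with hh1def
  have hh1 : ∀ u : (𝓞 K)ˣ, h1 u ∈ Fbar.ker := by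
    intro u
    rw [MonoidHom.mem_ker]
    show F (g' u) = 1
    have hd1 : d ((g' u : B) : Kˣ) = 1 := by
      have : Units.map (algebraMap (𝓞 K) K : (𝓞 K) →* K) u ∈ (toPrincipalIdeal (𝓞 K) K).ker := by
        rw [my_ker_toPrincipal]
        exact ⟨u, rfl⟩
      exact this
    rw [hF (g' u) 1 (by rw [one_pow, hd1])]
    exact map_one π
  set h' : (𝓞 K)ˣ →* Fbar.ker := h1.codRestrict Fbar.ker hh1 with hh'def
  have hh'surj : Function.Surjective h' := by
    rintro ⟨q, hq⟩
    obtain ⟨b, rfl⟩ := QuotientGroup.mk'_surjective p'.ker q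
    rw [MonoidHom.mem_ker, show ((QuotientGroup.mk' p'.ker) b) = QuotientGroup.mk b from rfl,
      hFbar] at hq
    obtain ⟨u, γ, huγ⟩ := hFker b hq
    refine ⟨u, Subtype.ext ?_⟩
    show (QuotientGroup.mk (g' u) : B ⧸ p'.ker) = QuotientGroup.mk b
    rw [QuotientGroup.eq, hp'ker, Subgroup.mem_subgroupOf]
    show ((g' u : B) : Kˣ)⁻¹ * (b : Kˣ) ∈ (powMonoidHom m : Kˣ →* Kˣ).range
    have : ((g' u : B) : Kˣ) = Units.map (algebraMap (𝓞 K) K : (𝓞 K) →* K) u := rfl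
    rw [this, huγ]
    refine ⟨γ, ?_⟩
    rw [powMonoidHom_apply]
    group
  have hh'ker : h'.ker = (powMonoidHom m : (𝓞 K)ˣ →* (𝓞 K)ˣ).range := by
    rw [← my_comap_pow (R := 𝓞 K) (K := K) m hm0]
    ext u
    rw [MonoidHom.mem_ker, Subgroup.mem_comap, Subtype.ext_iff]
    show (QuotientGroup.mk (g' u) : B ⧸ p'.ker) = 1 ↔ _
    rw [QuotientGroup.eq_one_iff, hp'ker, Subgroup.mem_subgroupOf]
    exact Iff.rfl
  set eker : ((𝓞 K)ˣ ⧸ h'.ker) ≃* Fbar.ker :=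
    QuotientGroup.quotientKerEquivOfSurjective h' hh'surj with hekerdef
  -- finiteness
  have hfinU : Finite ((𝓞 K)ˣ ⧸ (powMonoidHom m : (𝓞 K)ˣ →* (𝓞 K)ˣ).range) := by
    haveI hFG : Group.FG (𝓞 K)ˣ := Group.fg_iff_monoid_fg.mpr inferInstance
    apply CommGroup.finite_of_fg_torsion
    intro x
    obtain ⟨w, rfl⟩ := QuotientGroup.mk'_surjective _ x
    refine isOfFinOrder_iff_pow_eq_one.mpr ⟨m, hm0, ?_⟩
    rw [show ((QuotientGroup.mk' (powMonoidHom m : (𝓞 K)ˣ →* (𝓞 K)ˣ).range) w) ^ m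
      = QuotientGroup.mk (w ^ m) from rfl, QuotientGroup.eq_one_iff]
    exact ⟨w, rfl⟩
  have hfinKer : Finite Fbar.ker := by
    have : Finite ((𝓞 K)ˣ ⧸ h'.ker) := by rw [hh'ker]; exact hfinU
    exact Finite.of_equiv _ eker.toEquiv
  have hfinQ : Finite ((B ⧸ p'.ker) ⧸ Fbar.ker) := by
    have h2 : Finite Fbar.range := by
      rw [hrange]
      infer_instance
    exact Finite.of_equiv _ (QuotientGroup.quotientKerEquivRange Fbar).toEquiv.symm
  have hfinQB : Finite (B ⧸ p'.ker) :=
    Finite.of_equiv _ (Subgroup.groupEquivQuotientProdSubgroup (s := Fbar.ker)).symm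
  have hfinA : Finite A := Finite.of_equiv _ eA.toEquiv
  refine ⟨hfinA, ?_⟩
  -- cardinality
  have hc1 : Nat.card A = Nat.card (B ⧸ p'.ker) := Nat.card_congr eA.toEquiv.symm
  have hc2 : Nat.card (B ⧸ p'.ker) = Nat.card Fbar.range * Nat.card Fbar.ker := by
    rw [Subgroup.card_eq_card_quotient_mul_card_subgroup Fbar.ker]
    congr 1
    exact Nat.card_congr (QuotientGroup.quotientKerEquivRange Fbar).toEquiv
  have hc3 : Nat.card Fbar.range = Nat.card {c : ClassGroup (𝓞 K) // c ^ m = 1} := by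
    rw [hrange]
    exact Nat.card_congr (Equiv.subtypeEquivRight fun c => by
      rw [MonoidHom.mem_ker, powMonoidHom_apply])
  have hc4 : Nat.card Fbar.ker
      = Nat.card ((𝓞 K)ˣ ⧸ (powMonoidHom m : (𝓞 K)ˣ →* (𝓞 K)ˣ).range) := by
    rw [← hh'ker]
    exact Nat.card_congr eker.toEquiv.symm
  rw [hc1, hc2, hc3, hc4]
end

section
/- Let K be a number field with ring of integers O_K, let m ≥ 1 be an integer, and let n be the degree of K over ℚ. Then #A_{m,K} ≤ m^n · #(Cl(K)[m]); in particular, the m-torsion subgroup of the class group and the group A_{m,K} have the same cardinality up to a multiplicative factor depending only on m and n. (This is the quantitative content of the second assertion of Proposition 3.4 of the paper, identifying the size of Cl(μ_m) with that of Cl(K)[m] up to O_{m,n}(1).) -/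
open NumberField IsDedekindDomain FractionalIdeal Multiplicative
open scoped nonZeroDivisors

set_option linter.unusedSectionVars false

section Aux

open IsDedekindDomain.HeightOneSpectrum

variable {R : Type*} [CommRing R] [IsDedekindDomain R] {K : Type*} [Field K]
  [Algebra R K] [IsFractionRing R K]

lemma aux_count_spanSingleton (v : HeightOneSpectrum R) (x : Kˣ) :
    FractionalIdeal.count K v (spanSingleton R⁰ (x : K)) =
      -(Multiplicative.toAdd (v.valuationOfNeZero x)) := by
  classical
  set s := IsLocalization.sec R⁰ (x : K) with hs
  have hd0 : (algebraMap R K) (s.2 : R) ≠ 0 :=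
    map_ne_zero_of_mem_nonZeroDivisors _ (IsFractionRing.injective R K) s.2.property
  have hspec : (x : K) * algebraMap R K (s.2 : R) = algebraMap R K s.1 :=
    IsLocalization.sec_spec R⁰ (x : K)
  have hI : spanSingleton R⁰ (x : K) =
      spanSingleton R⁰ ((algebraMap R K) (s.2 : R))⁻¹ * ↑(Ideal.span {s.1} : Ideal R) := by
    rw [coeIdeal_span_singleton, spanSingleton_mul_spanSingleton, ← hspec,
      mul_comm ((algebraMap R K) (s.2 : R))⁻¹, mul_inv_cancel_right₀ hd0]
  have hne : spanSingleton R⁰ (x : K) ≠ 0 := by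
    rw [ne_eq, spanSingleton_eq_zero_iff]
    exact x.ne_zero
  rw [count_well_defined K v hne hI]
  show _ = -(Multiplicative.toAdd (v.valuationOfNeZeroToFun x))
  rw [valuationOfNeZeroToFun]
  simp only [toAdd_ofAdd]
  ring_nf
  rfl

lemma aux_eq_of_count_eq {I J : FractionalIdeal R⁰ K} (hI : I ≠ 0) (hJ : J ≠ 0)
    (h : ∀ v : HeightOneSpectrum R, FractionalIdeal.count K v I = FractionalIdeal.count K v J) :
    I = J := by
  rw [← finprod_heightOneSpectrum_factorization' K hI,
    ← finprod_heightOneSpectrum_factorization' K hJ]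
  exact finprod_congr fun v => by rw [h v]

lemma aux_root_unique {m : ℕ} (hm : 0 < m) {I J : FractionalIdeal R⁰ K} (hI : I ≠ 0) (hJ : J ≠ 0)
    (h : I ^ m = J ^ m) : I = J := by
  refine aux_eq_of_count_eq hI hJ fun v => ?_
  have := congrArg (FractionalIdeal.count K v) h
  rw [count_pow, count_pow] at this
  exact mul_left_cancel₀ (by exact_mod_cast hm.ne' : (m : ℤ) ≠ 0) this

lemma aux_root_spec {m : ℕ} (hm : 0 < m) {I : FractionalIdeal R⁰ K} (hI : I ≠ 0)
    (h : ∀ v : HeightOneSpectrum R, (m : ℤ) ∣ FractionalIdeal.count K v I) :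
    (∏ᶠ v : HeightOneSpectrum R,
        (v.asIdeal : FractionalIdeal R⁰ K) ^ (FractionalIdeal.count K v I / m)) ^ m = I ∧
      (∏ᶠ v : HeightOneSpectrum R,
        (v.asIdeal : FractionalIdeal R⁰ K) ^ (FractionalIdeal.count K v I / m)) ≠ 0 := by
  set e : HeightOneSpectrum R → ℤ := fun v => FractionalIdeal.count K v I / m with he
  have h_supp : (Function.mulSupport fun v : HeightOneSpectrum R =>
      (v.asIdeal : FractionalIdeal R⁰ K) ^ e v).Finite := by
    have hfin : {v : HeightOneSpectrum R | FractionalIdeal.count K v I ≠ 0}.Finite :=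
      Filter.eventually_cofinite.mp (finite_factors I)
    refine Set.Finite.subset hfin fun v hv => ?_
    simp only [Function.mem_mulSupport] at hv
    simp only [Set.mem_setOf_eq]
    intro hc
    rw [show e v = 0 by rw [he]; simp [hc], zpow_zero] at hv
    exact hv rfl
  have key : (∏ᶠ v : HeightOneSpectrum R,
      (v.asIdeal : FractionalIdeal R⁰ K) ^ e v) ^ m = I := by
    rw [finprod_pow h_supp]
    have : ∀ v : HeightOneSpectrum R,
        ((v.asIdeal : FractionalIdeal R⁰ K) ^ e v) ^ m =
          (v.asIdeal : FractionalIdeal R⁰ K) ^ (FractionalIdeal.count K v I) := by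
      intro v
      rw [← zpow_natCast ((v.asIdeal : FractionalIdeal R⁰ K) ^ e v) m, ← zpow_mul]
      congr 1
      exact Int.ediv_mul_cancel (h v)
    rw [finprod_congr this]
    exact finprod_heightOneSpectrum_factorization' K hI
  refine ⟨key, fun hc => hI ?_⟩
  rw [← key, hc, zero_pow hm.ne']

lemma aux_spanSingleton_unit (u : Rˣ) :
    spanSingleton R⁰ (algebraMap R K (u : R)) = 1 := by
  rw [← coeIdeal_span_singleton, Ideal.span_singleton_eq_top.mpr u.isUnit]
  simp

lemma aux_spanSingleton_eq_one {x : K} (h : spanSingleton R⁰ x = 1) :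
    ∃ u : Rˣ, algebraMap R K (u : R) = x := by
  have hx : x ∈ spanSingleton R⁰ x := mem_spanSingleton_self R⁰ x
  rw [h] at hx
  obtain ⟨y, hy⟩ := (FractionalIdeal.mem_one_iff R⁰).mp hx
  have hx0 : x ≠ 0 := by
    intro hc
    rw [hc, spanSingleton_zero] at h
    exact zero_ne_one h
  have hinv : spanSingleton R⁰ x⁻¹ = 1 := by
    rw [← spanSingleton_inv, h, inv_one]
  have hx' : x⁻¹ ∈ (1 : FractionalIdeal R⁰ K) := by
    rw [← hinv]; exact mem_spanSingleton_self R⁰ x⁻¹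
  obtain ⟨z, hz⟩ := (FractionalIdeal.mem_one_iff R⁰).mp hx'
  have hyz : y * z = 1 := by
    apply IsFractionRing.injective R K
    rw [_root_.map_mul, _root_.map_one, hy, hz, mul_inv_cancel₀ hx0]
  exact ⟨⟨y, z, hyz, by rwa [mul_comm] at hyz⟩, hy⟩


end Aux

lemma aux_card_le_of_gen {Q : Type*} [CommGroup Q] {m s : ℕ} (hm : 0 < m)
    (hpow : ∀ q : Q, q ^ m = 1) (g : Fin s → Q)
    (hg : ∀ q : Q, ∃ t : Fin s → ℤ, q = ∏ i, g i ^ t i) :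
    Nat.card Q ≤ m ^ s := by
  haveI : NeZero m := ⟨hm.ne'⟩
  have hred : ∀ (x : Q) (t : ℤ), x ^ t = x ^ ((t : ZMod m).val) := by
    intro x t
    have h1 : ((t : ZMod m).val : ℤ) = t % m := ZMod.val_intCast t
    have h2 : x ^ ((t : ZMod m).val) = x ^ (((t : ZMod m).val : ℤ)) := (zpow_natCast _ _).symm
    rw [h2, h1, Int.emod_def, sub_eq_add_neg, zpow_add, zpow_neg, zpow_mul, zpow_natCast,
      hpow x, one_zpow, inv_one, mul_one]
  have hsurj : Function.Surjective (fun d : Fin s → ZMod m => ∏ i, g i ^ ((d i).val)) := by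
    intro q
    obtain ⟨t, ht⟩ := hg q
    refine ⟨fun i => (t i : ZMod m), ?_⟩
    simp only
    rw [ht]
    exact Finset.prod_congr rfl fun i _ => (hred (g i) (t i)).symm
  calc Nat.card Q ≤ Nat.card (Fin s → ZMod m) := Nat.card_le_card_of_surjective _ hsurj
    _ = m ^ s := by
        rw [Nat.card_eq_fintype_card, Fintype.card_fun]
        simp [ZMod.card]


set_option maxHeartbeats 2000000 in
open IsDedekindDomain.HeightOneSpectrum in
lemma aux_main (K : Type*) [Field K] [NumberField K] (m : ℕ) (hm0 : 0 < m)
    (A : Subgroup (Kˣ ⧸ (powMonoidHom m : Kˣ →* Kˣ).range))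
    (hmem : ∀ α : Kˣ, ((QuotientGroup.mk α : Kˣ ⧸ (powMonoidHom m : Kˣ →* Kˣ).range) ∈ A ↔
      ∀ v : HeightOneSpectrum (𝓞 K), ∃ k : ℤ,
        v.valuation K ((α : K)) = ((Multiplicative.ofAdd ((m : ℤ) * k) : Multiplicative ℤ) :
          WithZero (Multiplicative ℤ)))) :
    Nat.card A ≤ m ^ (NumberField.Units.rank K + 1) *
      Nat.card {c : ClassGroup (𝓞 K) // c ^ m = 1} := by
  classical
  -- every element of the quotient has order dividing m
  have gpow : ∀ x : Kˣ ⧸ (powMonoidHom m : Kˣ →* Kˣ).range, x ^ m = 1 := by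
    intro x
    induction x using QuotientGroup.induction_on with
    | H α =>
      show (QuotientGroup.mk' (powMonoidHom m : Kˣ →* Kˣ).range α) ^ m = 1
      rw [← map_pow, QuotientGroup.mk'_apply, QuotientGroup.eq_one_iff]
      exact ⟨α, rfl⟩
  -- the subgroup `H` of `Kˣ` of elements with all valuations divisible by `m`
  set H : Subgroup Kˣ :=
    Subgroup.comap (QuotientGroup.mk' (powMonoidHom m : Kˣ →* Kˣ).range) A with hHdef
  -- divisibility of counts
  have hspan0 : ∀ a : Kˣ, spanSingleton (𝓞 K)⁰ ((a : Kˣ) : K) ≠ 0 := fun a => by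
    rw [ne_eq, spanSingleton_eq_zero_iff]; exact a.ne_zero
  have hdiv : ∀ a : Kˣ, a ∈ H → ∀ v : HeightOneSpectrum (𝓞 K),
      (m : ℤ) ∣ FractionalIdeal.count K v (spanSingleton (𝓞 K)⁰ ((a : Kˣ) : K)) := by
    intro a ha v
    obtain ⟨k, hk⟩ := (hmem a).mp ha v
    have h1 : v.valuationOfNeZero a = Multiplicative.ofAdd ((m : ℤ) * k) := by
      have h2 := v.valuationOfNeZero_eq a
      rw [hk] at h2
      exact WithZero.coe_inj.mp h2
    rw [aux_count_spanSingleton v a, h1, toAdd_ofAdd]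
    exact ⟨-k, by ring⟩
  -- the m-th root of the principal fractional ideal of `a`
  set j : Kˣ → FractionalIdeal (𝓞 K)⁰ K := fun a => ∏ᶠ v : HeightOneSpectrum (𝓞 K),
    (v.asIdeal : FractionalIdeal (𝓞 K)⁰ K) ^
      (FractionalIdeal.count K v (spanSingleton (𝓞 K)⁰ ((a : Kˣ) : K)) / m) with hjdef
  have hj : ∀ a : Kˣ, a ∈ H →
      (j a) ^ m = spanSingleton (𝓞 K)⁰ ((a : Kˣ) : K) ∧ j a ≠ 0 := fun a ha =>
    aux_root_spec hm0 (hspan0 a) (hdiv a ha)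
  have hjH : ∀ a : H, j ((a : Kˣ)) ≠ 0 := fun a => (hj _ a.2).2
  have hjmul : ∀ a b : Kˣ, a ∈ H → b ∈ H → j (a * b) = j a * j b := by
    intro a b ha hb
    refine aux_root_unique hm0 (hj _ (mul_mem ha hb)).2 (mul_ne_zero (hj _ ha).2 (hj _ hb).2) ?_
    rw [(hj _ (mul_mem ha hb)).1, mul_pow, (hj _ ha).1, (hj _ hb).1,
      spanSingleton_mul_spanSingleton, Units.val_mul]
  -- the homomorphism from H to the class group
  set Φ' : H →* ClassGroup (𝓞 K) :=
    { toFun := fun a => ClassGroup.mk K (Units.mk0 (j ((a : Kˣ))) (hjH a))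
      map_one' := by
        have hj1 : j (1 : Kˣ) = 1 := by
          refine aux_root_unique hm0 (hj 1 (one_mem H)).2 one_ne_zero ?_
          rw [(hj 1 (one_mem H)).1, Units.val_one, spanSingleton_one, one_pow]
        show ClassGroup.mk K (Units.mk0 (j (((1 : H) : Kˣ))) (hjH 1)) = 1
        have h2 : Units.mk0 (j (((1 : H) : Kˣ))) (hjH 1) = 1 := Units.ext (by exact hj1)
        rw [h2, _root_.map_one]
      map_mul' := by
        intro a b
        show ClassGroup.mk K (Units.mk0 (j (((a * b : H) : Kˣ))) (hjH (a * b))) =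
          ClassGroup.mk K (Units.mk0 (j ((a : Kˣ))) (hjH a)) *
            ClassGroup.mk K (Units.mk0 (j ((b : Kˣ))) (hjH b))
        rw [← _root_.map_mul]
        congr 1
        exact Units.ext (by exact hjmul _ _ a.2 b.2) } with hΦ'def
  -- Φ' lands in the m-torsion
  have hΦtor : ∀ a : H, (Φ' a) ^ m = 1 := by
    intro a
    show (ClassGroup.mk K (Units.mk0 (j ((a : Kˣ))) (hjH a))) ^ m = 1
    rw [← map_pow]
    refine ClassGroup.mk_eq_one_iff.mpr ?_
    refine ⟨⟨((a : Kˣ) : K), ?_⟩⟩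
    have hval : (((Units.mk0 (j ((a : Kˣ))) (hjH a)) ^ m : (FractionalIdeal (𝓞 K)⁰ K)ˣ) :
        FractionalIdeal (𝓞 K)⁰ K) = spanSingleton (𝓞 K)⁰ ((a : Kˣ) : K) := by
      rw [Units.val_pow_eq_pow_val, Units.val_mk0, (hj _ a.2).1]
    rw [hval, coe_spanSingleton]
  -- ψA : H →* A, surjective
  have hψval : ∀ a : H, (QuotientGroup.mk' (powMonoidHom m : Kˣ →* Kˣ).range) ((a : Kˣ)) ∈ A :=
    fun a => a.2
  set ψA : H →* A :=
    ((QuotientGroup.mk' (powMonoidHom m : Kˣ →* Kˣ).range).comp H.subtype).codRestrict A hψval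
    with hψAdef
  have hψAsurj : Function.Surjective ψA := by
    intro q
    obtain ⟨α, hα⟩ := QuotientGroup.mk'_surjective (powMonoidHom m : Kˣ →* Kˣ).range
      (q : Kˣ ⧸ (powMonoidHom m : Kˣ →* Kˣ).range)
    have hαH : α ∈ H := by
      show (QuotientGroup.mk' (powMonoidHom m : Kˣ →* Kˣ).range) α ∈ A
      rw [hα]; exact q.2
    exact ⟨⟨α, hαH⟩, Subtype.ext hα⟩
  -- the induced map on the quotient
  have hkerle : ψA.ker ≤ Φ'.ker := by
    intro a ha
    rw [MonoidHom.mem_ker] at ha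
    have ha' : (QuotientGroup.mk' (powMonoidHom m : Kˣ →* Kˣ).range) ((a : Kˣ)) = 1 :=
      Subtype.ext_iff.mp ha
    rw [QuotientGroup.mk'_apply, QuotientGroup.eq_one_iff] at ha'
    obtain ⟨δ, hδ⟩ := ha'
    have hδ' : ((a : Kˣ) : K) = ((δ : Kˣ) : K) ^ m := by
      rw [← hδ, powMonoidHom_apply, Units.val_pow_eq_pow_val]
    have h1 : j ((a : Kˣ)) = spanSingleton (𝓞 K)⁰ ((δ : Kˣ) : K) := by
      refine aux_root_unique hm0 (hjH a) (hspan0 δ) ?_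
      rw [(hj _ a.2).1, spanSingleton_pow, hδ']
    show ClassGroup.mk K (Units.mk0 (j ((a : Kˣ))) (hjH a)) = 1
    refine ClassGroup.mk_eq_one_iff.mpr ?_
    refine ⟨⟨((δ : Kˣ) : K), ?_⟩⟩
    rw [Units.val_mk0, h1, coe_spanSingleton]
  set Φ : (H ⧸ ψA.ker) →* ClassGroup (𝓞 K) := QuotientGroup.lift ψA.ker Φ' hkerle with hΦdef
  have hΦmk : ∀ a : H, Φ (QuotientGroup.mk' ψA.ker a) = Φ' a := fun a => rfl
  have eQ : (H ⧸ ψA.ker) ≃* A := QuotientGroup.quotientKerEquivOfSurjective ψA hψAsurj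
  -- cardinality of the range of Φ
  haveI : Finite (ClassGroup (𝓞 K)) := Finite.of_fintype _
  have hrangetor : ∀ c : ClassGroup (𝓞 K), c ∈ Φ.range → c ^ m = 1 := by
    rintro c ⟨q, rfl⟩
    obtain ⟨a, ha⟩ := QuotientGroup.mk'_surjective ψA.ker q
    rw [← ha, hΦmk]
    exact hΦtor a
  have hr2 : Nat.card Φ.range ≤ Nat.card {c : ClassGroup (𝓞 K) // c ^ m = 1} := by
    refine Nat.card_le_card_of_injective
      (fun c => (⟨(c : ClassGroup (𝓞 K)), hrangetor _ c.2⟩ :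
        {c : ClassGroup (𝓞 K) // c ^ m = 1})) ?_
    intro x y hxy
    have hxy' := congrArg
      (fun t : {c : ClassGroup (𝓞 K) // c ^ m = 1} => (t : ClassGroup (𝓞 K))) hxy
    exact Subtype.ext hxy'
  -- units map into the kernel of Φ
  have hUmem : ∀ u : (𝓞 K)ˣ, (Units.map (algebraMap (𝓞 K) K : (𝓞 K) →* K) u) ∈ H := by
    intro u
    refine (hmem _).mpr ?_
    intro v
    refine ⟨0, ?_⟩
    rw [mul_zero, ofAdd_zero, WithZero.coe_one]
    have h1 := v.valuation_of_unit_eq (K := K) u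
    have h2 := v.valuationOfNeZero_eq (Units.map (algebraMap (𝓞 K) K : (𝓞 K) →* K) u)
    rw [h1] at h2
    rw [← h2, WithZero.coe_one]
  set μ : (𝓞 K)ˣ →* H :=
    (Units.map (algebraMap (𝓞 K) K : (𝓞 K) →* K)).codRestrict H hUmem with hμdef
  set τ : (𝓞 K)ˣ →* (H ⧸ ψA.ker) := (QuotientGroup.mk' ψA.ker).comp μ with hτdef
  have hτker : ∀ u : (𝓞 K)ˣ, τ u ∈ Φ.ker := by
    intro u
    rw [MonoidHom.mem_ker]
    show Φ (QuotientGroup.mk' ψA.ker (μ u)) = 1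
    rw [hΦmk]
    show ClassGroup.mk K (Units.mk0 (j ((μ u : Kˣ))) (hjH (μ u))) = 1
    have hcoe : ((μ u : Kˣ) : K) = algebraMap (𝓞 K) K (u : 𝓞 K) := rfl
    have h1 : j ((μ u : Kˣ)) = 1 := by
      refine aux_root_unique hm0 (hjH (μ u)) one_ne_zero ?_
      rw [(hj _ (μ u).2).1, one_pow, hcoe, aux_spanSingleton_unit]
    have h2 : Units.mk0 (j ((μ u : Kˣ))) (hjH (μ u)) = 1 := Units.ext (by exact h1)
    rw [h2, _root_.map_one]
  set σ : (𝓞 K)ˣ → Φ.ker := fun u => ⟨τ u, hτker u⟩ with hσdef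
  -- every element of the kernel comes from a unit
  have hkerrep : ∀ x : Φ.ker, ∃ u : (𝓞 K)ˣ, σ u = x := by
    intro x
    obtain ⟨a, ha⟩ := QuotientGroup.mk'_surjective ψA.ker (x : H ⧸ ψA.ker)
    have hΦ'a : Φ' a = 1 := by
      have hx := x.2
      rw [MonoidHom.mem_ker, ← ha, hΦmk] at hx
      exact hx
    obtain ⟨⟨x0, hx0⟩⟩ := ClassGroup.mk_eq_one_iff.mp hΦ'a
    have hja : j ((a : Kˣ)) = spanSingleton (𝓞 K)⁰ x0 :=
      coeToSubmodule_injective (show ((j ((a : Kˣ))) : Submodule (𝓞 K) K) =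
        ((spanSingleton (𝓞 K)⁰ x0 : FractionalIdeal (𝓞 K)⁰ K) : Submodule (𝓞 K) K) from by
          rw [coe_spanSingleton]; exact hx0)
    have hx0ne : x0 ≠ 0 := by
      intro hc
      rw [hc, spanSingleton_zero] at hja
      exact hjH a hja
    have hpowa : spanSingleton (𝓞 K)⁰ (x0 ^ m) = spanSingleton (𝓞 K)⁰ ((a : Kˣ) : K) := by
      rw [← spanSingleton_pow, ← hja, (hj _ a.2).1]
    haveI : NoZeroSMulDivisors (𝓞 K) K :=
      ⟨fun {c x} h => by
        rw [Algebra.smul_def] at h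
        rcases mul_eq_zero.mp h with h | h
        · exact Or.inl ((map_eq_zero_iff _ (IsFractionRing.injective (𝓞 K) K)).mp h)
        · exact Or.inr h⟩
    obtain ⟨z, hz⟩ := spanSingleton_eq_spanSingleton.mp hpowa
    have hz' : ((a : Kˣ) : K) = algebraMap (𝓞 K) K (z : 𝓞 K) * x0 ^ m := by
      rw [← hz, Units.smul_def, Algebra.smul_def]
    refine ⟨z, ?_⟩
    apply Subtype.ext
    show τ z = (x : H ⧸ ψA.ker)
    rw [← ha, hτdef, MonoidHom.comp_apply, QuotientGroup.mk'_apply, QuotientGroup.mk'_apply,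
      QuotientGroup.eq]
    rw [MonoidHom.mem_ker]
    apply Subtype.ext
    show (QuotientGroup.mk' (powMonoidHom m : Kˣ →* Kˣ).range) (((μ z)⁻¹ * a : H) : Kˣ) = 1
    have hcoe2 : (((μ z)⁻¹ * a : H) : Kˣ) =
        (Units.map (algebraMap (𝓞 K) K : (𝓞 K) →* K) z)⁻¹ * (a : Kˣ) := rfl
    rw [hcoe2, _root_.map_mul, _root_.map_inv, QuotientGroup.mk'_apply, QuotientGroup.mk'_apply]
    have hx0u : ((a : Kˣ)) = (Units.map (algebraMap (𝓞 K) K : (𝓞 K) →* K) z) *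
        (Units.mk0 x0 hx0ne) ^ m := by
      apply Units.ext
      rw [Units.val_mul, Units.val_pow_eq_pow_val]
      exact hz'
    have hone : (QuotientGroup.mk ((Units.mk0 x0 hx0ne) ^ m) :
        Kˣ ⧸ (powMonoidHom m : Kˣ →* Kˣ).range) = 1 := by
      rw [QuotientGroup.eq_one_iff]
      exact ⟨Units.mk0 x0 hx0ne, rfl⟩
    rw [hx0u, QuotientGroup.mk_mul, hone]
    simp
  -- m-torsion in Q and its subgroups
  have hQpow : ∀ q : H ⧸ ψA.ker, q ^ m = 1 := by
    intro q
    induction q using QuotientGroup.induction_on with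
    | H a =>
      show (QuotientGroup.mk' ψA.ker a) ^ m = 1
      rw [← map_pow, QuotientGroup.mk'_apply, QuotientGroup.eq_one_iff, MonoidHom.mem_ker,
        map_pow]
      apply Subtype.ext
      show ((ψA a : A) : Kˣ ⧸ (powMonoidHom m : Kˣ →* Kˣ).range) ^ m = 1
      exact gpow _
  have hKpow : ∀ q : Φ.ker, q ^ m = 1 := by
    intro q
    apply Subtype.ext
    show ((q : H ⧸ ψA.ker)) ^ m = 1
    exact hQpow _
  -- generators of the kernel
  obtain ⟨ζg, hζg⟩ := IsCyclic.exists_generator (α := (NumberField.Units.torsion K))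
  set g : Fin (NumberField.Units.rank K + 1) → Φ.ker :=
    Fin.cons (σ ((ζg : (𝓞 K)ˣ))) (fun i => σ (NumberField.Units.fundSystem K i)) with hgdef
  have hgen : ∀ q : Φ.ker, ∃ t : Fin (NumberField.Units.rank K + 1) → ℤ,
      q = ∏ i, g i ^ t i := by
    intro q
    obtain ⟨u, hu⟩ := hkerrep q
    obtain ⟨⟨ζ, ξ⟩, hdec, -⟩ := NumberField.Units.exist_unique_eq_mul_prod K u
    obtain ⟨b, hb⟩ := Subgroup.mem_zpowers_iff.mp (hζg ζ)
    refine ⟨Fin.cons b ξ, ?_⟩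
    apply Subtype.ext
    rw [← hu]
    have hcoeprod := map_prod Φ.ker.subtype
      (fun i => g i ^ (Fin.cons b ξ : Fin (NumberField.Units.rank K + 1) → ℤ) i) Finset.univ
    simp only [map_zpow] at hcoeprod
    show τ u = ((∏ i, g i ^ (Fin.cons b ξ : Fin (NumberField.Units.rank K + 1) → ℤ) i :
      Φ.ker) : H ⧸ ψA.ker)
    rw [show ((∏ i, g i ^ (Fin.cons b ξ : Fin (NumberField.Units.rank K + 1) → ℤ) i :
      Φ.ker) : H ⧸ ψA.ker) = Φ.ker.subtype (∏ i, g i ^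
        (Fin.cons b ξ : Fin (NumberField.Units.rank K + 1) → ℤ) i) from rfl, hcoeprod,
      Fin.prod_univ_succ]
    simp only [Fin.cons_zero, Fin.cons_succ, hgdef]
    have hdecu : u = ((ζg : (𝓞 K)ˣ)) ^ b * ∏ i, (NumberField.Units.fundSystem K i) ^ (ξ i) := by
      rw [hdec]
      congr 1
      rw [← hb]
      rfl
    rw [hdecu, _root_.map_mul, map_zpow, map_prod]
    congr 1
    exact Finset.prod_congr rfl fun i _ => map_zpow τ _ _
  have hker_card : Nat.card Φ.ker ≤ m ^ (NumberField.Units.rank K + 1) :=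
    aux_card_le_of_gen hm0 hKpow g hgen
  -- assemble
  have hcardA : Nat.card A = Nat.card (H ⧸ ψA.ker) := (Nat.card_congr eQ.toEquiv).symm
  have hsplit : Nat.card (H ⧸ ψA.ker) =
      Nat.card ((H ⧸ ψA.ker) ⧸ Φ.ker) * Nat.card Φ.ker :=
    Subgroup.card_eq_card_quotient_mul_card_subgroup Φ.ker
  have hquot : Nat.card ((H ⧸ ψA.ker) ⧸ Φ.ker) = Nat.card Φ.range :=
    Nat.card_congr (QuotientGroup.quotientKerEquivRange Φ).toEquiv
  calc Nat.card A = Nat.card ((H ⧸ ψA.ker) ⧸ Φ.ker) * Nat.card Φ.ker := by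
        rw [hcardA, hsplit]
    _ ≤ Nat.card {c : ClassGroup (𝓞 K) // c ^ m = 1} * (m ^ (NumberField.Units.rank K + 1)) := by
        refine Nat.mul_le_mul ?_ hker_card
        rw [hquot]; exact hr2
    _ = m ^ (NumberField.Units.rank K + 1) * Nat.card {c : ClassGroup (𝓞 K) // c ^ m = 1} :=
        Nat.mul_comm _ _

/-- Let `K` be a number field of degree `n` and `m ≥ 1`. Let `A = A_{m,K}` be
the subgroup of `K^×/(K^×)^m` of classes of elements all of whose valuations at finite places
are divisible by `m`. Then `#A ≤ m^n * #(Cl(K)[m])`. -/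
theorem stmt12 (K : Type*) [Field K] [NumberField K] (m : ℕ) (hm : 1 ≤ m)
    (n : ℕ) (hn : Module.finrank ℚ K = n)
    (A : Subgroup (Kˣ ⧸ (powMonoidHom m : Kˣ →* Kˣ).range))
    (hA : (A : Set (Kˣ ⧸ (powMonoidHom m : Kˣ →* Kˣ).range)) =
      {q | ∀ α : Kˣ, (QuotientGroup.mk α : Kˣ ⧸ (powMonoidHom m : Kˣ →* Kˣ).range) = q →
        ∀ v : HeightOneSpectrum (𝓞 K), ∃ k : ℤ,
          v.valuation K ((α : K)) =
            ((Multiplicative.ofAdd ((m : ℤ) * k) : Multiplicative ℤ) :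
              WithZero (Multiplicative ℤ))}) :
    Nat.card A ≤ m ^ n * Nat.card {c : ClassGroup (𝓞 K) // c ^ m = 1} := by
  classical
  have hm0 : 0 < m := hm
  have hmem : ∀ α : Kˣ, ((QuotientGroup.mk α : Kˣ ⧸ (powMonoidHom m : Kˣ →* Kˣ).range) ∈ A ↔
      ∀ v : HeightOneSpectrum (𝓞 K), ∃ k : ℤ,
        v.valuation K ((α : K)) = ((Multiplicative.ofAdd ((m : ℤ) * k) : Multiplicative ℤ) :
          WithZero (Multiplicative ℤ))) := by
    intro α
    constructor
    · intro h
      have h' : (QuotientGroup.mk α : Kˣ ⧸ (powMonoidHom m : Kˣ →* Kˣ).range) ∈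
          (A : Set (Kˣ ⧸ (powMonoidHom m : Kˣ →* Kˣ).range)) := h
      rw [hA] at h'
      exact h' α rfl
    · intro hPα
      show (QuotientGroup.mk α : Kˣ ⧸ (powMonoidHom m : Kˣ →* Kˣ).range) ∈
        (A : Set (Kˣ ⧸ (powMonoidHom m : Kˣ →* Kˣ).range))
      rw [hA]
      intro β hβ v
      rw [QuotientGroup.eq] at hβ
      obtain ⟨δ, hδ⟩ := hβ
      have hβ' : α = β * (δ : Kˣ) ^ m := by
        have hδ' : δ ^ m = β⁻¹ * α := hδ
        rw [hδ']
        group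
      obtain ⟨k, hk⟩ := hPα v
      set t : ℤ := Multiplicative.toAdd (v.valuationOfNeZero δ) with ht
      have hδval : v.valuation K (((δ : Kˣ) : K)) =
          ((Multiplicative.ofAdd t : Multiplicative ℤ) : WithZero (Multiplicative ℤ)) := by
        rw [← IsDedekindDomain.HeightOneSpectrum.valuationOfNeZero_eq, ht, ofAdd_toAdd]
      have hαval : v.valuation K ((α : K)) =
          v.valuation K ((β : K)) * (v.valuation K (((δ : Kˣ) : K))) ^ m := by
        rw [← map_pow, ← _root_.map_mul]
        congr 1
        rw [hβ', Units.val_mul, Units.val_pow_eq_pow_val]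
      refine ⟨k - t, ?_⟩
      have hβval : v.valuation K ((β : K)) =
          v.valuation K ((α : K)) * ((v.valuation K (((δ : Kˣ) : K))) ^ m)⁻¹ := by
        rw [hαval]
        rw [mul_inv_cancel_right₀]
        apply pow_ne_zero
        rw [hδval]
        exact WithZero.coe_ne_zero
      rw [hβval, hk, hδval, ← WithZero.coe_pow, ← WithZero.coe_inv, ← WithZero.coe_mul]
      congr 1
      rw [← ofAdd_nsmul, ← ofAdd_neg, ← ofAdd_add]
      congr 1
      push_cast
      ring
  have hmain := aux_main K m hm0 A hmem
  refine hmain.trans ?_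
  refine Nat.mul_le_mul ?_ le_rfl
  refine Nat.pow_le_pow_right hm0 ?_
  have h1 : NumberField.Units.rank K + 1 = Fintype.card (InfinitePlace K) := by
    rw [NumberField.Units.rank]
    exact Nat.succ_pred_eq_of_pos Fintype.card_pos
  have h2 : Fintype.card (InfinitePlace K) =
      NumberField.InfinitePlace.nrRealPlaces K + NumberField.InfinitePlace.nrComplexPlaces K :=
    NumberField.InfinitePlace.card_eq_nrRealPlaces_add_nrComplexPlaces K
  have h3 : NumberField.InfinitePlace.nrRealPlaces K +
      2 * NumberField.InfinitePlace.nrComplexPlaces K = Module.finrank ℚ K :=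
    NumberField.InfinitePlace.card_add_two_mul_card_eq_rank K
  omega
end
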